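/- (Monotone coupling for conditioned PNG trajectory lines, Lemma 6.2.) Let t₁ < t₂ < t₃ be real numbers, let a₁, a₂, a₃ ∈ ℤ, and let h̃ be a fixed PNG trajectory line on [t₁, t₃] with h̃(t₁) < a₁ and h̃(t₃) < a₃. Let H be the set of PNG trajectory lines h on [t₁, t₃] with h(t₁) = a₁, h(t₃) = a₃ and h > h̃, and assume H is nonempty; let G be the set of PNG trajectory lines g on [t₁, t₃] with g(t₁) = a₁ and g(t₃) = a₃. Let h be a random element of H distributed with probability proportional to the weight w(h), and let g be a random element of G distributed with probability proportional to the weight w(g). Then P( h(t₂) ≥ a₂ ) ≥ P( g(t₂) ≥ a₂ ). -/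

import Mathlib

open MeasureTheory Filter Set

noncomputable section

/-- The parity jump condition for (the integer values of) a PNG trajectory line on `[t₁, t₃]`:
at even integers in the interior the jump is upward or zero, at odd integers it is
downward or zero. -/
def PNGJump (t₁ t₃ : ℝ) (f : ℤ → ℤ) : Prop :=
  ∀ n : ℤ, t₁ < (n : ℝ) → (n : ℝ) < t₃ →
    (Even n → f (n - 1) ≤ f n) ∧ (Odd n → f n ≤ f (n - 1))

/-- A PNG trajectory line on `[t₁, t₃]`, encoded by its values `f k` at the integer points
(the line itself is `t ↦ f ⌊t⌋`); the values outside `[⌊t₁⌋, ⌊t₃⌋]` are normalized to be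
constant. -/
def PNGLineOn (t₁ t₃ : ℝ) : Set (ℤ → ℤ) :=
  {f | PNGJump t₁ t₃ f ∧ (∀ m : ℤ, m ≤ ⌊t₁⌋ → f m = f ⌊t₁⌋) ∧
    ∀ m : ℤ, ⌊t₃⌋ ≤ m → f m = f ⌊t₃⌋}

/-- Strict ordering `f > g` of PNG trajectory lines on `I`:
`limsup_{t→t₀} g(t) < liminf_{t→t₀} f(t)` for every `t₀ ∈ I`. -/
def PNGGt (I : Set ℝ) (f g : ℤ → ℤ) : Prop :=
  ∀ t₀ ∈ I,
    Filter.limsup (fun t : ℝ => (g ⌊t⌋ : ℝ)) (nhds t₀) <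
      Filter.liminf (fun t : ℝ => (f ⌊t⌋ : ℝ)) (nhds t₀)

/-- The weight `w(h) = ∏_{k=⌊t₁⌋+1}^{⌊t₃⌋} p(|h(k) − h(k−ε)|)`, `p(k) = √(1−q)·(√q)^k`. -/
def pngWeight (q t₁ t₃ : ℝ) (f : ℤ → ℤ) : ℝ :=
  ∏ k ∈ Finset.Icc (⌊t₁⌋ + 1) ⌊t₃⌋,
    (Real.sqrt (1 - q) * Real.sqrt q ^ (f k - f (k - 1)).natAbs)

/-- The probability of the event `E` for a random PNG trajectory line in `S` distributed
proportionally to its weight. -/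
def pngProb (q t₁ t₃ : ℝ) (S E : Set (ℤ → ℤ)) : ℝ :=
  (∑' f : ↥(S ∩ E), pngWeight q t₁ t₃ (f : ℤ → ℤ)) /
    ∑' f : ↥S, pngWeight q t₁ t₃ (f : ℤ → ℤ)

/-! ### Auxiliary lemmas: FKG inequality in `tsum` form -/

/-- tsum version of the FKG inequality for a nonnegative summable log-supermodular weight. -/
theorem png_tsum_fkg {α : Type*} [DistribLattice α] {w : α → ℝ}
    (h0 : ∀ x, 0 ≤ w x) (hsum : Summable w)
    (hsm : ∀ a b, w a * w b ≤ w (a ⊓ b) * w (a ⊔ b)) {A B : Set α}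
    (hA : ∀ ⦃x y⦄, x ≤ y → x ∈ A → y ∈ A) (hB : ∀ ⦃x y⦄, x ≤ y → x ∈ B → y ∈ B) :
    (∑' x, A.indicator w x) * (∑' x, B.indicator w x) ≤
      (∑' x, w x) * (∑' x, (A ∩ B).indicator w x) := by
  classical
  have hind : ∀ (S : Set α) x, 0 ≤ S.indicator w x := fun S x =>
    Set.indicator_nonneg (fun y _ => h0 y) x
  have hsA : Summable (A.indicator w) := hsum.indicator A
  have hsB : Summable (B.indicator w) := hsum.indicator B
  have hsAB : Summable ((A ∩ B).indicator w) := hsum.indicator _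
  have key : ∀ F : Finset α,
      (∑ x ∈ F, A.indicator w x) * (∑ x ∈ F, B.indicator w x) ≤
        (∑' x, w x) * (∑' x, (A ∩ B).indicator w x) := by
    intro F
    have h4 := four_functions_theorem (A.indicator w) (B.indicator w) w ((A ∩ B).indicator w)
      (fun x => hind A x) (fun x => hind B x) (fun x => h0 x) (fun x => hind _ x) ?_ F F
    · refine h4.trans (mul_le_mul ?_ ?_ ?_ (tsum_nonneg h0))
      · exact Summable.sum_le_tsum _ (fun i _ => h0 i) hsum
      · exact Summable.sum_le_tsum _ (fun i _ => hind _ i) hsAB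
      · exact Finset.sum_nonneg fun i _ => hind _ i
    · intro a b
      by_cases ha : a ∈ A
      · by_cases hb : b ∈ B
        · rw [Set.indicator_of_mem ha, Set.indicator_of_mem hb,
            Set.indicator_of_mem (Set.mem_inter (hA le_sup_left ha) (hB le_sup_right hb))]
          exact hsm a b
        · rw [Set.indicator_of_notMem hb, mul_zero]
          exact mul_nonneg (h0 _) (hind _ _)
      · rw [Set.indicator_of_notMem ha, zero_mul]
        exact mul_nonneg (h0 _) (hind _ _)
  have ht : Tendsto (fun F : Finset α =>
      (∑ x ∈ F, A.indicator w x) * (∑ x ∈ F, B.indicator w x)) atTop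
      (nhds ((∑' x, A.indicator w x) * (∑' x, B.indicator w x))) :=
    Filter.Tendsto.mul hsA.hasSum hsB.hasSum
  exact le_of_tendsto' ht key

/-! ### Auxiliary lemmas: limsup/liminf of step functions -/

lemma png_floor_eventually_eq {t₀ : ℝ} (h : (⌊t₀⌋ : ℝ) < t₀) :
    ∀ᶠ t in nhds t₀, ⌊t⌋ = ⌊t₀⌋ := by
  have hmem : t₀ ∈ Ioo ((⌊t₀⌋ : ℝ)) (⌊t₀⌋ + 1) := ⟨h, Int.lt_floor_add_one t₀⟩
  filter_upwards [Ioo_mem_nhds hmem.1 hmem.2] with t ht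
  exact Int.floor_eq_iff.2 ⟨ht.1.le, ht.2⟩

lemma png_limsup_noninteger (g : ℤ → ℤ) {t₀ : ℝ} (h : (⌊t₀⌋ : ℝ) < t₀) :
    Filter.limsup (fun t : ℝ => (g ⌊t⌋ : ℝ)) (nhds t₀) = (g ⌊t₀⌋ : ℝ) := by
  have he : ∀ᶠ t in nhds t₀, (fun t : ℝ => (g ⌊t⌋ : ℝ)) t = (fun _ : ℝ => (g ⌊t₀⌋ : ℝ)) t := by
    filter_upwards [png_floor_eventually_eq h] with t ht; rw [ht]
  rw [limsup_congr he, limsup_const]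

lemma png_liminf_noninteger (g : ℤ → ℤ) {t₀ : ℝ} (h : (⌊t₀⌋ : ℝ) < t₀) :
    Filter.liminf (fun t : ℝ => (g ⌊t⌋ : ℝ)) (nhds t₀) = (g ⌊t₀⌋ : ℝ) := by
  have he : ∀ᶠ t in nhds t₀, (fun t : ℝ => (g ⌊t⌋ : ℝ)) t = (fun _ : ℝ => (g ⌊t₀⌋ : ℝ)) t := by
    filter_upwards [png_floor_eventually_eq h] with t ht; rw [ht]
  rw [liminf_congr he, liminf_const]

lemma png_floor_eventually_or (n : ℤ) :
    ∀ᶠ t in nhds (n : ℝ), ⌊t⌋ = n - 1 ∨ ⌊t⌋ = n := by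
  have hmem : (n : ℝ) ∈ Ioo ((n : ℝ) - 1) ((n : ℝ) + 1) := by
    constructor <;> linarith
  filter_upwards [Ioo_mem_nhds hmem.1 hmem.2] with t ht
  rcases lt_or_ge t (n : ℝ) with h | h
  · left
    refine Int.floor_eq_iff.2 ⟨?_, ?_⟩ <;> push_cast <;> [linarith [ht.1]; linarith]
  · right
    exact Int.floor_eq_iff.2 ⟨h, ht.2⟩

lemma png_bounded_above (g : ℤ → ℤ) (n : ℤ) :
    ∀ᶠ t in nhds (n : ℝ), (g ⌊t⌋ : ℝ) ≤ (max (g (n - 1)) (g n) : ℤ) := by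
  filter_upwards [png_floor_eventually_or n] with t ht
  rcases ht with h | h <;> rw [h] <;> exact_mod_cast le_max_iff.2 (by simp)

lemma png_bounded_below (g : ℤ → ℤ) (n : ℤ) :
    ∀ᶠ t in nhds (n : ℝ), ((min (g (n - 1)) (g n) : ℤ) : ℝ) ≤ (g ⌊t⌋ : ℝ) := by
  filter_upwards [png_floor_eventually_or n] with t ht
  rcases ht with h | h <;> rw [h] <;> exact_mod_cast min_le_iff.2 (by simp)

lemma png_limsup_le_max (g : ℤ → ℤ) (n : ℤ) :
    Filter.limsup (fun t : ℝ => (g ⌊t⌋ : ℝ)) (nhds (n : ℝ)) ≤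
      ((max (g (n - 1)) (g n) : ℤ) : ℝ) :=
  limsup_le_of_le (isCoboundedUnder_le_of_eventually_le _ (png_bounded_below g n))
    (png_bounded_above g n)

lemma png_min_le_liminf (g : ℤ → ℤ) (n : ℤ) :
    ((min (g (n - 1)) (g n) : ℤ) : ℝ) ≤
      Filter.liminf (fun t : ℝ => (g ⌊t⌋ : ℝ)) (nhds (n : ℝ)) :=
  le_liminf_of_le (isCoboundedUnder_ge_of_eventually_le _ (png_bounded_above g n))
    (png_bounded_below g n)

lemma png_freq_right (g : ℤ → ℤ) (n : ℤ) :
    ∃ᶠ t in nhds (n : ℝ), (g ⌊t⌋ : ℝ) = (g n : ℝ) :=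
  frequently_iff.mpr fun hU => ⟨(n : ℝ), mem_of_mem_nhds hU, by rw [Int.floor_intCast]⟩

lemma png_freq_left (g : ℤ → ℤ) (n : ℤ) :
    ∃ᶠ t in nhds (n : ℝ), (g ⌊t⌋ : ℝ) = (g (n - 1) : ℝ) := by
  have hev : ∀ᶠ t in nhdsWithin (n : ℝ) (Iio (n : ℝ)), (g ⌊t⌋ : ℝ) = (g (n - 1) : ℝ) := by
    have h1 : Ioo ((n : ℝ) - 1) ((n : ℝ) + 1) ∈ nhdsWithin (n : ℝ) (Iio (n : ℝ)) :=
      mem_nhdsWithin_of_mem_nhds (Ioo_mem_nhds (by linarith) (by linarith))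
    filter_upwards [h1, self_mem_nhdsWithin] with t ht ht'
    have : ⌊t⌋ = n - 1 := by
      refine Int.floor_eq_iff.2 ⟨?_, ?_⟩ <;> push_cast <;>
        [linarith [ht.1]; linarith [mem_Iio.1 ht']]
    rw [this]
  exact (hev.frequently).filter_mono nhdsWithin_le_nhds

lemma png_le_limsup_right (g : ℤ → ℤ) (n : ℤ) :
    (g n : ℝ) ≤ Filter.limsup (fun t : ℝ => (g ⌊t⌋ : ℝ)) (nhds (n : ℝ)) :=
  le_limsup_of_frequently_le ((png_freq_right g n).mono fun _ h => h.ge)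
    ⟨_, (png_bounded_above g n).mono fun _ h => h⟩

lemma png_le_limsup_left (g : ℤ → ℤ) (n : ℤ) :
    (g (n - 1) : ℝ) ≤ Filter.limsup (fun t : ℝ => (g ⌊t⌋ : ℝ)) (nhds (n : ℝ)) :=
  le_limsup_of_frequently_le ((png_freq_left g n).mono fun _ h => h.ge)
    ⟨_, (png_bounded_above g n).mono fun _ h => h⟩

lemma png_liminf_le_right (g : ℤ → ℤ) (n : ℤ) :
    Filter.liminf (fun t : ℝ => (g ⌊t⌋ : ℝ)) (nhds (n : ℝ)) ≤ (g n : ℝ) :=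
  liminf_le_of_frequently_le ((png_freq_right g n).mono fun _ h => h.le)
    ⟨_, (png_bounded_below g n).mono fun _ h => h⟩

lemma png_liminf_le_left (g : ℤ → ℤ) (n : ℤ) :
    Filter.liminf (fun t : ℝ => (g ⌊t⌋ : ℝ)) (nhds (n : ℝ)) ≤ (g (n - 1) : ℝ) :=
  liminf_le_of_frequently_le ((png_freq_left g n).mono fun _ h => h.le)
    ⟨_, (png_bounded_below g n).mono fun _ h => h⟩

/-! ### Auxiliary lemmas: the weight -/

variable {q t₁ t₃ : ℝ}

lemma pngWeight_pos (hq : q ∈ Set.Ioo (0:ℝ) 1) (f : ℤ → ℤ) : 0 < pngWeight q t₁ t₃ f := by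
  refine Finset.prod_pos fun k _ => mul_pos (Real.sqrt_pos.2 (by linarith [hq.2])) ?_
  exact pow_pos (Real.sqrt_pos.2 hq.1) _

lemma png_sqrt_q_lt_one (hq : q ∈ Set.Ioo (0:ℝ) 1) : Real.sqrt q < 1 := by
  have := Real.sqrt_lt_sqrt hq.1.le hq.2
  rwa [Real.sqrt_one] at this

lemma pngWeight_supermodular (hq : q ∈ Set.Ioo (0:ℝ) 1) (a b : ℤ → ℤ) :
    pngWeight q t₁ t₃ a * pngWeight q t₁ t₃ b ≤
      pngWeight q t₁ t₃ (a ⊓ b) * pngWeight q t₁ t₃ (a ⊔ b) := by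
  unfold pngWeight
  rw [← Finset.prod_mul_distrib, ← Finset.prod_mul_distrib]
  refine Finset.prod_le_prod (fun k _ => ?_) (fun k _ => ?_)
  · exact mul_nonneg (mul_nonneg (Real.sqrt_nonneg _) (pow_nonneg (Real.sqrt_nonneg _) _))
      (mul_nonneg (Real.sqrt_nonneg _) (pow_nonneg (Real.sqrt_nonneg _) _))
  · set c := Real.sqrt (1 - q) with hc
    set r := Real.sqrt q with hr
    have hr0 : 0 ≤ r := Real.sqrt_nonneg _
    have hr1 : r ≤ 1 := (png_sqrt_q_lt_one hq).le
    have hc0 : 0 ≤ c := Real.sqrt_nonneg _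
    have hexp : ((a ⊓ b) k - (a ⊓ b) (k - 1)).natAbs + ((a ⊔ b) k - (a ⊔ b) (k - 1)).natAbs ≤
        (a k - a (k - 1)).natAbs + (b k - b (k - 1)).natAbs := by
      have h1 : (a ⊓ b) k = min (a k) (b k) := rfl
      have h2 : (a ⊓ b) (k - 1) = min (a (k - 1)) (b (k - 1)) := rfl
      have h3 : (a ⊔ b) k = max (a k) (b k) := rfl
      have h4 : (a ⊔ b) (k - 1) = max (a (k - 1)) (b (k - 1)) := rfl
      rw [h1, h2, h3, h4]; omega
    calc c * r ^ (a k - a (k-1)).natAbs * (c * r ^ (b k - b (k-1)).natAbs)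
        = c * c * r ^ ((a k - a (k-1)).natAbs + (b k - b (k-1)).natAbs) := by rw [pow_add]; ring
      _ ≤ c * c * r ^ (((a ⊓ b) k - (a ⊓ b) (k-1)).natAbs +
            ((a ⊔ b) k - (a ⊔ b) (k-1)).natAbs) :=
          mul_le_mul_of_nonneg_left (pow_le_pow_of_le_one hr0 hr1 hexp) (mul_nonneg hc0 hc0)
      _ = c * r ^ ((a ⊓ b) k - (a ⊓ b) (k-1)).natAbs *
            (c * r ^ ((a ⊔ b) k - (a ⊔ b) (k-1)).natAbs) := by rw [pow_add]; ring

lemma png_summable_phi (hq : q ∈ Set.Ioo (0:ℝ) 1) :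
    Summable (fun j : ℤ => Real.sqrt (1 - q) * Real.sqrt q ^ j.natAbs) := by
  have hgeo : Summable (fun n : ℕ => Real.sqrt (1 - q) * Real.sqrt q ^ n) :=
    (summable_geometric_of_lt_one (Real.sqrt_nonneg _) (png_sqrt_q_lt_one hq)).mul_left _
  refine Summable.of_nat_of_neg ?_ ?_ <;> simpa using hgeo

lemma png_summable_pi_fin (n : ℕ) (φ : ℤ → ℝ) (h0 : ∀ x, 0 ≤ φ x) (hs : Summable φ) :
    Summable (fun x : Fin n → ℤ => ∏ i, φ (x i)) := by
  induction n with
  | zero =>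
    have hU : (fun x : Fin 0 → ℤ => ∏ i, φ (x i)) = fun _ => 1 := funext fun x => by simp
    rw [hU]
    haveI : Finite (Fin 0 → ℤ) := Finite.of_subsingleton
    exact Summable.of_finite
  | succ n ih =>
    have hmul : Summable (fun p : ℤ × (Fin n → ℤ) => φ p.1 * ∏ i, φ (p.2 i)) :=
      @Summable.mul_of_nonneg ℤ (Fin n → ℤ) φ (fun x => ∏ i, φ (x i)) hs ih
        (fun x => h0 x) (fun x => Finset.prod_nonneg fun i _ => h0 _)
    let e : (Fin (n+1) → ℤ) ≃ ℤ × (Fin n → ℤ) :=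
      { toFun := fun x => (x 0, fun i => x i.succ)
        invFun := fun p => Fin.cons p.1 p.2
        left_inv := fun x => funext fun i => by
          refine Fin.cases ?_ (fun j => ?_) i <;> simp
        right_inv := fun p => by simp }
    have h2 : Summable ((fun p : ℤ × (Fin n → ℤ) => φ p.1 * ∏ i, φ (p.2 i)) ∘ e) :=
      e.summable_iff.2 hmul
    refine h2.congr fun x => ?_
    simp only [Function.comp_apply, e, Equiv.coe_fn_mk]
    rw [Fin.prod_univ_succ]

lemma png_summable_pi {ι : Type*} [Fintype ι] (φ : ℤ → ℝ) (h0 : ∀ x, 0 ≤ φ x)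
    (hs : Summable φ) : Summable (fun x : ι → ℤ => ∏ i, φ (x i)) := by
  classical
  let e := Fintype.equivFin ι
  have h := png_summable_pi_fin (Fintype.card ι) φ h0 hs
  have h2 : Summable ((fun y : Fin (Fintype.card ι) → ℤ => ∏ j, φ (y j)) ∘
      (Equiv.arrowCongr e (Equiv.refl ℤ))) :=
    (Equiv.arrowCongr e (Equiv.refl ℤ)).summable_iff.2 h
  refine h2.congr fun x => ?_
  simp only [Function.comp_apply, Equiv.arrowCongr_apply, Equiv.refl_apply, Function.comp]
  exact Equiv.prod_comp e.symm (fun i => φ (x i))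

lemma png_summable_SG (hq : q ∈ Set.Ioo (0:ℝ) 1) (a₁ a₃ : ℤ) :
    Summable (fun f : ↥{f | f ∈ PNGLineOn t₁ t₃ ∧ f ⌊t₁⌋ = a₁ ∧ f ⌊t₃⌋ = a₃} =>
      pngWeight q t₁ t₃ (f : ℤ → ℤ)) := by
  classical
  set SG := {f | f ∈ PNGLineOn t₁ t₃ ∧ f ⌊t₁⌋ = a₁ ∧ f ⌊t₃⌋ = a₃} with hSG
  set K := Finset.Icc (⌊t₁⌋ + 1) ⌊t₃⌋ with hK
  set φ : ℤ → ℝ := fun j => Real.sqrt (1 - q) * Real.sqrt q ^ j.natAbs with hφ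
  have hφ0 : ∀ j, 0 ≤ φ j := fun j =>
    mul_nonneg (Real.sqrt_nonneg _) (pow_nonneg (Real.sqrt_nonneg _) _)
  have hF : Summable (fun x : ↥K → ℤ => ∏ i, φ (x i)) :=
    png_summable_pi φ hφ0 (png_summable_phi hq)
  let J : ↥SG → (↥K → ℤ) := fun f i => f.1 i.1 - f.1 (i.1 - 1)
  have hJ : Function.Injective J := by
    intro f g h
    obtain ⟨⟨hjf, hnf1, hnf3⟩, hf1, hf3⟩ := f.2
    obtain ⟨⟨hjg, hng1, hng3⟩, hg1, hg3⟩ := g.2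
    have hjumps : ∀ k, ⌊t₁⌋ + 1 ≤ k → k ≤ ⌊t₃⌋ → f.1 k - f.1 (k-1) = g.1 k - g.1 (k-1) := by
      intro k hk1 hk2
      exact congrFun h ⟨k, Finset.mem_Icc.2 ⟨hk1, hk2⟩⟩
    have key : ∀ k, ⌊t₁⌋ ≤ k → k ≤ ⌊t₃⌋ → f.1 k = g.1 k := by
      refine fun k hk => Int.le_induction (m := ⌊t₁⌋)
        (motive := fun k _ => k ≤ ⌊t₃⌋ → f.1 k = g.1 k) ?_ ?_ k hk
      · intro _; rw [hf1, hg1]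
      · intro n hn ih hn3
        have hj := hjumps (n+1) (by omega) hn3
        have hsimp : (n + 1) - 1 = n := by ring
        rw [hsimp] at hj
        have := ih (by omega)
        omega
    apply Subtype.ext; funext k
    rcases le_or_gt k ⌊t₁⌋ with hk | hk
    · rw [hnf1 k hk, hng1 k hk, hf1, hg1]
    · rcases le_or_gt ⌊t₃⌋ k with hk3 | hk3
      · rw [hnf3 k hk3, hng3 k hk3, hf3, hg3]
      · exact key k hk.le hk3.le
  have hcomp := hF.comp_injective hJ
  refine hcomp.congr fun f => ?_
  show ∏ i : ↥K, φ (J f i) = pngWeight q t₁ t₃ f.1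
  rw [pngWeight, ← hK]
  exact Finset.prod_coe_sort K (fun k => φ (f.1 k - f.1 (k-1)))

/-! ### Characterization of `PNGGt` for normalized lines -/

lemma png_gt_iff {f ht : ℤ → ℤ} (hhtm : ht ∈ PNGLineOn t₁ t₃) (hfm : f ∈ PNGLineOn t₁ t₃)
    (h13 : t₁ ≤ t₃) :
    PNGGt (Set.Icc t₁ t₃) f ht ↔
      ((∀ n : ℤ, t₁ ≤ (n:ℝ) → (n:ℝ) ≤ t₃ →
          max (ht (n-1)) (ht n) < min (f (n-1)) (f n)) ∧ ht ⌊t₁⌋ < f ⌊t₁⌋) := by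
  constructor
  · intro H
    constructor
    · intro n hn1 hn3
      have h := H (n : ℝ) ⟨hn1, hn3⟩
      have l1 : ((max (ht (n-1)) (ht n) : ℤ) : ℝ) ≤
          Filter.limsup (fun t : ℝ => (ht ⌊t⌋ : ℝ)) (nhds (n : ℝ)) := by
        push_cast
        exact max_le (png_le_limsup_left ht n) (png_le_limsup_right ht n)
      have l2 : Filter.liminf (fun t : ℝ => (f ⌊t⌋ : ℝ)) (nhds (n : ℝ)) ≤
          ((min (f (n-1)) (f n) : ℤ) : ℝ) := by
        push_cast
        exact le_min (png_liminf_le_left f n) (png_liminf_le_right f n)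
      exact_mod_cast (l1.trans_lt h).trans_le l2
    · have h := H t₁ ⟨le_refl _, h13⟩
      rcases eq_or_lt_of_le (Int.floor_le t₁) with heq | hlt
      · have l1 : (ht ⌊t₁⌋ : ℝ) ≤ Filter.limsup (fun t : ℝ => (ht ⌊t⌋ : ℝ)) (nhds t₁) := by
          rw [← heq, Int.floor_intCast]; exact png_le_limsup_right ht ⌊t₁⌋
        have l2 : Filter.liminf (fun t : ℝ => (f ⌊t⌋ : ℝ)) (nhds t₁) ≤ (f ⌊t₁⌋ : ℝ) := by
          rw [← heq, Int.floor_intCast]; exact png_liminf_le_right f ⌊t₁⌋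
        exact_mod_cast (l1.trans_lt h).trans_le l2
      · rw [png_limsup_noninteger ht hlt, png_liminf_noninteger f hlt] at h
        exact_mod_cast h
  · rintro ⟨Hmax, H1⟩ t₀ ht₀
    rcases eq_or_lt_of_le (Int.floor_le t₀) with heq | hlt
    · have h := Hmax ⌊t₀⌋ (by rw [heq]; exact ht₀.1) (by rw [heq]; exact ht₀.2)
      calc Filter.limsup (fun t : ℝ => (ht ⌊t⌋ : ℝ)) (nhds t₀)
          = Filter.limsup (fun t : ℝ => (ht ⌊t⌋ : ℝ)) (nhds ((⌊t₀⌋ : ℤ) : ℝ)) := by rw [heq]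
        _ ≤ ((max (ht (⌊t₀⌋-1)) (ht ⌊t₀⌋) : ℤ) : ℝ) := png_limsup_le_max ht ⌊t₀⌋
        _ < ((min (f (⌊t₀⌋-1)) (f ⌊t₀⌋) : ℤ) : ℝ) := by exact_mod_cast h
        _ ≤ Filter.liminf (fun t : ℝ => (f ⌊t⌋ : ℝ)) (nhds ((⌊t₀⌋ : ℤ) : ℝ)) :=
            png_min_le_liminf f ⌊t₀⌋
        _ = Filter.liminf (fun t : ℝ => (f ⌊t⌋ : ℝ)) (nhds t₀) := by rw [heq]
    · rw [png_limsup_noninteger ht hlt, png_liminf_noninteger f hlt]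
      rcases le_or_gt t₁ ((⌊t₀⌋ : ℤ) : ℝ) with hc | hc
      · have h := Hmax ⌊t₀⌋ hc ((Int.floor_le t₀).trans ht₀.2)
        have : ht ⌊t₀⌋ < f ⌊t₀⌋ :=
          lt_of_le_of_lt (le_max_right _ _) (lt_of_lt_of_le h (min_le_right _ _))
        exact_mod_cast this
      · have h1 : ⌊t₀⌋ ≤ ⌊t₁⌋ := Int.le_floor.2 hc.le
        have h2 : ⌊t₁⌋ ≤ ⌊t₀⌋ := Int.floor_le_floor ht₀.1
        have hn : ⌊t₀⌋ = ⌊t₁⌋ := le_antisymm h1 h2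
        rw [hn]
        exact_mod_cast H1

/-- Monotone coupling for conditioned PNG trajectory lines, Lemma 6.2. -/
theorem png_monotone_coupling (q : ℝ) (hq : q ∈ Set.Ioo (0 : ℝ) 1)
    (t₁ t₂ t₃ : ℝ) (h12 : t₁ < t₂) (h23 : t₂ < t₃)
    (a₁ a₂ a₃ : ℤ) (ht : ℤ → ℤ) (hht : ht ∈ PNGLineOn t₁ t₃)
    (h1 : ht ⌊t₁⌋ < a₁) (h3 : ht ⌊t₃⌋ < a₃)
    (hne : {f | f ∈ PNGLineOn t₁ t₃ ∧ f ⌊t₁⌋ = a₁ ∧ f ⌊t₃⌋ = a₃ ∧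
        PNGGt (Set.Icc t₁ t₃) f ht}.Nonempty) :
    pngProb q t₁ t₃
        {f | f ∈ PNGLineOn t₁ t₃ ∧ f ⌊t₁⌋ = a₁ ∧ f ⌊t₃⌋ = a₃}
        {f | a₂ ≤ f ⌊t₂⌋} ≤
      pngProb q t₁ t₃
        {f | f ∈ PNGLineOn t₁ t₃ ∧ f ⌊t₁⌋ = a₁ ∧ f ⌊t₃⌋ = a₃ ∧ PNGGt (Set.Icc t₁ t₃) f ht}
        {f | a₂ ≤ f ⌊t₂⌋} := by
  classical
  have h13 : t₁ ≤ t₃ := (h12.trans h23).le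
  set W : (ℤ → ℤ) → ℝ := pngWeight q t₁ t₃ with hW
  set SG : Set (ℤ → ℤ) := {f | f ∈ PNGLineOn t₁ t₃ ∧ f ⌊t₁⌋ = a₁ ∧ f ⌊t₃⌋ = a₃} with hSGdef
  set A : Set (ℤ → ℤ) := {f | a₂ ≤ f ⌊t₂⌋} with hAdef
  set B : Set (ℤ → ℤ) := {f | (∀ n : ℤ, t₁ ≤ (n:ℝ) → (n:ℝ) ≤ t₃ →
      max (ht (n-1)) (ht n) < min (f (n-1)) (f n)) ∧ ht ⌊t₁⌋ < f ⌊t₁⌋} with hBdef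
  -- the conditioned set is SG ∩ B
  have hHeq : {f | f ∈ PNGLineOn t₁ t₃ ∧ f ⌊t₁⌋ = a₁ ∧ f ⌊t₃⌋ = a₃ ∧
      PNGGt (Set.Icc t₁ t₃) f ht} = SG ∩ B := by
    ext f
    simp only [hSGdef, hBdef, Set.mem_setOf_eq, Set.mem_inter_iff]
    constructor
    · rintro ⟨hp, hf1, hf3, hgt⟩
      exact ⟨⟨hp, hf1, hf3⟩, (png_gt_iff hht hp h13).1 hgt⟩
    · rintro ⟨⟨hp, hf1, hf3⟩, hb⟩
      exact ⟨hp, hf1, hf3, (png_gt_iff hht hp h13).2 hb⟩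
  set w : (ℤ → ℤ) → ℝ := SG.indicator W with hwdef
  have hW0 : ∀ x, 0 ≤ W x := fun x => (pngWeight_pos hq x).le
  have hw0 : ∀ x, 0 ≤ w x := fun x => Set.indicator_nonneg (fun y _ => hW0 y) x
  have hwsum : Summable w := by
    rw [hwdef, ← summable_subtype_iff_indicator]
    exact png_summable_SG hq a₁ a₃
  -- SG is a sublattice
  have hSGlat : ∀ {a b : ℤ → ℤ}, a ∈ SG → b ∈ SG → (a ⊓ b) ∈ SG ∧ (a ⊔ b) ∈ SG := by
    rintro a b ⟨⟨hja, hna1, hna3⟩, ha1, ha3⟩ ⟨⟨hjb, hnb1, hnb3⟩, hb1, hb3⟩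
    refine ⟨⟨⟨?_, ?_, ?_⟩, ?_, ?_⟩, ⟨⟨?_, ?_, ?_⟩, ?_, ?_⟩⟩
    · intro n hn1 hn3
      exact ⟨fun he => min_le_min ((hja n hn1 hn3).1 he) ((hjb n hn1 hn3).1 he),
        fun ho => min_le_min ((hja n hn1 hn3).2 ho) ((hjb n hn1 hn3).2 ho)⟩
    · intro m hm
      show a m ⊓ b m = a ⌊t₁⌋ ⊓ b ⌊t₁⌋
      rw [hna1 m hm, hnb1 m hm]
    · intro m hm
      show a m ⊓ b m = a ⌊t₃⌋ ⊓ b ⌊t₃⌋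
      rw [hna3 m hm, hnb3 m hm]
    · show a ⌊t₁⌋ ⊓ b ⌊t₁⌋ = a₁
      rw [ha1, hb1]; exact min_self a₁
    · show a ⌊t₃⌋ ⊓ b ⌊t₃⌋ = a₃
      rw [ha3, hb3]; exact min_self a₃
    · intro n hn1 hn3
      exact ⟨fun he => max_le_max ((hja n hn1 hn3).1 he) ((hjb n hn1 hn3).1 he),
        fun ho => max_le_max ((hja n hn1 hn3).2 ho) ((hjb n hn1 hn3).2 ho)⟩
    · intro m hm
      show a m ⊔ b m = a ⌊t₁⌋ ⊔ b ⌊t₁⌋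
      rw [hna1 m hm, hnb1 m hm]
    · intro m hm
      show a m ⊔ b m = a ⌊t₃⌋ ⊔ b ⌊t₃⌋
      rw [hna3 m hm, hnb3 m hm]
    · show a ⌊t₁⌋ ⊔ b ⌊t₁⌋ = a₁
      rw [ha1, hb1]; exact max_self a₁
    · show a ⌊t₃⌋ ⊔ b ⌊t₃⌋ = a₃
      rw [ha3, hb3]; exact max_self a₃
  have hwsm : ∀ a b : ℤ → ℤ, w a * w b ≤ w (a ⊓ b) * w (a ⊔ b) := by
    intro a b
    by_cases ha : a ∈ SG
    · by_cases hb : b ∈ SG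
      · rw [hwdef, Set.indicator_of_mem ha, Set.indicator_of_mem hb,
          Set.indicator_of_mem (hSGlat ha hb).1, Set.indicator_of_mem (hSGlat ha hb).2]
        exact pngWeight_supermodular hq a b
      · rw [hwdef, Set.indicator_of_notMem hb, mul_zero]
        exact mul_nonneg (hw0 _) (hw0 _)
    · rw [hwdef, Set.indicator_of_notMem ha, zero_mul]
      exact mul_nonneg (hw0 _) (hw0 _)
  have hA : ∀ ⦃x y : ℤ → ℤ⦄, x ≤ y → x ∈ A → y ∈ A := fun x y hxy hx =>
    le_trans hx (hxy ⌊t₂⌋)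
  have hB : ∀ ⦃x y : ℤ → ℤ⦄, x ≤ y → x ∈ B → y ∈ B := by
    rintro x y hxy ⟨hx1, hx2⟩
    refine ⟨fun n hn1 hn3 => lt_of_lt_of_le (hx1 n hn1 hn3)
      (min_le_min (hxy (n-1)) (hxy n)), lt_of_lt_of_le hx2 (hxy ⌊t₁⌋)⟩
  -- rewrite the four tsums as indicator tsums
  have e1 : ∀ C : Set (ℤ → ℤ), (∑' f : ↥(SG ∩ C), W (f : ℤ → ℤ)) = ∑' x, C.indicator w x := by
    intro C
    rw [tsum_subtype]
    refine tsum_congr fun x => ?_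
    by_cases h1' : x ∈ SG <;> by_cases h2' : x ∈ C <;>
      simp [hwdef, Set.indicator_apply, h1', h2']
  have eSG : (∑' f : ↥SG, W (f : ℤ → ℤ)) = ∑' x, w x := by
    rw [tsum_subtype]
  -- positivity of the denominators
  obtain ⟨f₀, hf₀⟩ := hne
  have hf₀' : f₀ ∈ SG ∩ B := by rw [← hHeq]; exact hf₀
  have hT : 0 < ∑' x, w x := by
    refine lt_of_lt_of_le ?_ (Summable.le_tsum hwsum f₀ fun j _ => hw0 j)
    rw [hwdef, Set.indicator_of_mem hf₀'.1]
    exact pngWeight_pos hq f₀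
  have hTB : 0 < ∑' x, B.indicator w x := by
    refine lt_of_lt_of_le ?_ (Summable.le_tsum (hwsum.indicator B) f₀ fun j _ =>
      Set.indicator_nonneg (fun y _ => hw0 y) j)
    rw [Set.indicator_of_mem hf₀'.2, hwdef, Set.indicator_of_mem hf₀'.1]
    exact pngWeight_pos hq f₀
  -- reduce to the FKG inequality
  rw [pngProb, pngProb, hHeq]
  have hABset : (SG ∩ B) ∩ A = SG ∩ (A ∩ B) := by
    ext x; simp only [Set.mem_inter_iff]; tauto
  rw [hABset]
  rw [← hW]
  rw [e1 A, e1 (A ∩ B), e1 B, eSG]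
  rw [div_le_div_iff₀ hT hTB]
  have hfkg := png_tsum_fkg hw0 hwsum hwsm hA hB
  nlinarith [hfkg]

end
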